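/- For every p ≥ 1, the p-th cumulant of the minimum cost C_{3,3,3} of a 3×3 bipartite perfect matching equals κ_p = (p-1)!·(5/3^p + 1/4^p − ρ₁^{-p} − ρ₂^{-p} − ρ₃^{-p}), where ρ₁, ρ₂, ρ₃ are the three complex roots of 162 − 90t + 16t² − t³. Moreover, since all |ρ_i| > 3, one has κ_p ~ 5(p-1)!/3^p as p → ∞. -/

import Mathlib

open Filter

lemma aux_root_abs (z : ℂ) (h : 162 - 90 * z + 16 * z ^ 2 - z ^ 3 = 0) :
    3 < ‖z‖ := by
  by_contra hc
  push_neg at hc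
  have hs : z.re ^ 2 + z.im ^ 2 ≤ 9 := by
    have h1 : ‖z‖ ^ 2 ≤ 9 := by nlinarith [norm_nonneg z]
    rw [Complex.sq_norm, Complex.normSq_apply] at h1
    nlinarith
  rw [Complex.ext_iff] at h
  obtain ⟨hre, him⟩ := h
  simp [pow_succ, Complex.mul_re, Complex.mul_im, Complex.sub_re, Complex.sub_im,
    Complex.re_ofNat, Complex.im_ofNat] at hre him
  set x := z.re; set y := z.im
  rcases eq_or_ne y 0 with hy | hy
  · rw [hy] at hre hs
    nlinarith [sq_nonneg (x - 3), sq_nonneg x, sq_nonneg (x + 3)]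
  · have h2 : y * (3 * x ^ 2 - y ^ 2 - 32 * x + 90) = 0 := by linear_combination -him
    have him' : 3 * x ^ 2 - y ^ 2 - 32 * x + 90 = 0 := (mul_eq_zero.mp h2).resolve_left hy
    nlinarith [sq_nonneg (2 * x - 8)]

lemma aux_G_iter (ρ : Fin 3 → ℂ) (hρ3 : ∀ i, 3 < ‖ρ i‖) (n : ℕ) :
    ∀ t ∈ Metric.ball (0:ℂ) 1,
      iteratedDeriv n (fun s => 5 * (3 - s)⁻¹ + (4 - s)⁻¹ - ∑ i, (ρ i - s)⁻¹) t
      = n.factorial * (5 * (3 - t) ^ (-(n + 1 : ℕ) : ℤ) + (4 - t) ^ (-(n + 1 : ℕ) : ℤ)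
          - ∑ i, (ρ i - t) ^ (-(n + 1 : ℕ) : ℤ)) := by
  have key : ∀ t : ℂ, t ∈ Metric.ball (0:ℂ) 1 →
      (3 - t ≠ 0 ∧ 4 - t ≠ 0 ∧ ∀ i, ρ i - t ≠ 0) := by
    intro t ht
    rw [Metric.mem_ball, dist_zero_right] at ht
    refine ⟨?_, ?_, fun i => ?_⟩
    · intro h; rw [sub_eq_zero] at h
      have : ‖(3:ℂ)‖ < 1 := h ▸ ht
      simp at this
    · intro h; rw [sub_eq_zero] at h
      have : ‖(4:ℂ)‖ < 1 := h ▸ ht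
      simp at this
    · intro h; rw [sub_eq_zero] at h
      have h3 := hρ3 i
      rw [h] at h3
      have : ‖t‖ = ‖t‖ := rfl
      linarith [this ▸ h3]
  induction n with
  | zero =>
    intro t ht
    obtain ⟨h3, h4, hr⟩ := key t ht
    simp only [iteratedDeriv_zero, Nat.factorial_zero, Nat.cast_one, one_mul,
      Nat.zero_add, Nat.cast_ofNat]
    norm_num [zpow_neg]
  | succ n ih =>
    intro t ht
    obtain ⟨h3, h4, hr⟩ := key t ht
    have heq : iteratedDeriv n (fun s => 5 * (3 - s)⁻¹ + (4 - s)⁻¹ - ∑ i, (ρ i - s)⁻¹)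
        =ᶠ[nhds t] fun s => (n.factorial : ℂ) *
          (5 * (3 - s) ^ (-(n + 1 : ℕ) : ℤ) + (4 - s) ^ (-(n + 1 : ℕ) : ℤ)
            - ∑ i, (ρ i - s) ^ (-(n + 1 : ℕ) : ℤ)) :=
      Filter.eventually_of_mem (Metric.isOpen_ball.mem_nhds ht) (fun s hs => ih s hs)
    rw [iteratedDeriv_succ, heq.deriv_eq]
    have hd3 : HasDerivAt (fun s : ℂ => (3 - s) ^ (-(n + 1 : ℕ) : ℤ))
        (((-(n + 1 : ℕ) : ℤ) : ℂ) * (3 - t) ^ ((-(n + 1 : ℕ) : ℤ) - 1) * (-1)) t :=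
      (hasDerivAt_zpow _ _ (Or.inl h3)).comp t ((hasDerivAt_id t).const_sub 3)
    have hd4 : HasDerivAt (fun s : ℂ => (4 - s) ^ (-(n + 1 : ℕ) : ℤ))
        (((-(n + 1 : ℕ) : ℤ) : ℂ) * (4 - t) ^ ((-(n + 1 : ℕ) : ℤ) - 1) * (-1)) t :=
      (hasDerivAt_zpow _ _ (Or.inl h4)).comp t ((hasDerivAt_id t).const_sub 4)
    have hdr : ∀ i : Fin 3, HasDerivAt (fun s : ℂ => (ρ i - s) ^ (-(n + 1 : ℕ) : ℤ))
        (((-(n + 1 : ℕ) : ℤ) : ℂ) * (ρ i - t) ^ ((-(n + 1 : ℕ) : ℤ) - 1) * (-1)) t :=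
      fun i => (hasDerivAt_zpow _ _ (Or.inl (hr i))).comp t ((hasDerivAt_id t).const_sub (ρ i))
    have hsum : HasDerivAt (fun s : ℂ => ∑ i, (ρ i - s) ^ (-(n + 1 : ℕ) : ℤ))
        (∑ i : Fin 3, ((-(n + 1 : ℕ) : ℤ) : ℂ) * (ρ i - t) ^ ((-(n + 1 : ℕ) : ℤ) - 1) * (-1)) t :=
      HasDerivAt.fun_sum (fun i _ => hdr i)
    have hH : HasDerivAt (fun s : ℂ => (n.factorial : ℂ) *
        (5 * (3 - s) ^ (-(n + 1 : ℕ) : ℤ) + (4 - s) ^ (-(n + 1 : ℕ) : ℤ)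
          - ∑ i, (ρ i - s) ^ (-(n + 1 : ℕ) : ℤ)))
        ((n.factorial : ℂ) *
          (5 * (((-(n + 1 : ℕ) : ℤ) : ℂ) * (3 - t) ^ ((-(n + 1 : ℕ) : ℤ) - 1) * (-1))
            + (((-(n + 1 : ℕ) : ℤ) : ℂ) * (4 - t) ^ ((-(n + 1 : ℕ) : ℤ) - 1) * (-1))
            - ∑ i : Fin 3, ((-(n + 1 : ℕ) : ℤ) : ℂ) * (ρ i - t) ^ ((-(n + 1 : ℕ) : ℤ) - 1) * (-1))) t :=
      (((hd3.const_mul 5).add hd4).sub hsum).const_mul _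
    rw [hH.deriv]
    have hexp : (-(n + 1 : ℕ) : ℤ) - 1 = (-(n + 1 + 1 : ℕ) : ℤ) := by push_cast; ring
    rw [hexp, Fin.sum_univ_three, Fin.sum_univ_three]
    push_cast [Nat.factorial_succ]
    ring


lemma aux_ratio (f A B C T Q : ℂ) (hf : f ≠ 0) (hT : T ≠ 0) :
    f * (5 / T + 1 / Q - (A⁻¹ + B⁻¹ + C⁻¹)) / (5 * f / T) =
    1 + (1/5) * (T/Q) - (1/5) * (T/A + T/B + T/C) := by
  rw [div_div_eq_mul_div, mul_assoc, mul_comm (5:ℂ) f, mul_div_mul_left _ _ hf,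
    sub_mul, add_mul, div_mul_cancel₀ _ hT]
  field_simp

set_option maxHeartbeats 2000000 in
/-- The cumulants of `C_{3,3,3}` are
`κ_p = (p-1)!·(5/3^p + 1/4^p − ρ₁^{-p} − ρ₂^{-p} − ρ₃^{-p})`, where `ρ₁, ρ₂, ρ₃` are the
roots of `162 − 90t + 16t² − t³`, and since all `|ρᵢ| > 3` one has
`κ_p ~ 5(p-1)!/3^p` as `p → ∞`. -/
theorem cumulants_of_C333
    (F : ℂ → ℂ)
    (hF : F = fun t => 6 * (162 - 90 * t + 16 * t ^ 2 - t ^ 3) / ((4 - t) * (3 - t) ^ 5))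
    (ρ : Fin 3 → ℂ)
    (hρ : ∀ t : ℂ, 162 - 90 * t + 16 * t ^ 2 - t ^ 3 = -∏ i, (t - ρ i))
    (L : ℂ → ℂ) (hLa : AnalyticAt ℂ L 0) (hL0 : L 0 = 0)
    (hFL : ∀ᶠ t in nhds (0 : ℂ), Complex.exp (L t) = F t)
    (κ : ℕ → ℂ) (hκ : ∀ p, κ p = iteratedDeriv p L 0) :
    (∀ i, 3 < ‖ρ i‖) ∧
    (∀ p : ℕ, 1 ≤ p → κ p = (Nat.factorial (p - 1) : ℂ) *
      (5 / 3 ^ p + 1 / 4 ^ p - ∑ i, (ρ i) ^ (-(p : ℤ)))) ∧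
    Tendsto (fun p : ℕ => κ p / (5 * (Nat.factorial (p - 1) : ℂ) / 3 ^ p))
      atTop (nhds 1) := by
  -- Part 1 : the roots have modulus > 3
  have habs : ∀ i, 3 < ‖ρ i‖ := by
    intro i
    apply aux_root_abs
    rw [hρ (ρ i), Finset.prod_eq_zero (Finset.mem_univ i) (sub_self (ρ i)), neg_zero]
  -- basic nonvanishing facts on the unit ball
  have key : ∀ t : ℂ, t ∈ Metric.ball (0:ℂ) 1 →
      (3 - t ≠ 0 ∧ 4 - t ≠ 0 ∧ ∀ i, t - ρ i ≠ 0) := by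
    intro t ht
    rw [Metric.mem_ball, dist_zero_right] at ht
    refine ⟨?_, ?_, fun i => ?_⟩
    · intro h; rw [sub_eq_zero] at h
      have : ‖(3:ℂ)‖ < 1 := h ▸ ht
      simp at this
    · intro h; rw [sub_eq_zero] at h
      have : ‖(4:ℂ)‖ < 1 := h ▸ ht
      simp at this
    · intro h; rw [sub_eq_zero] at h
      have h3 := habs i
      rw [← h] at h3
      have : ‖t‖ = ‖t‖ := rfl
      linarith [this ▸ h3]
  -- the factored form of F
  have hF2 : F = fun t : ℂ => 6 * (-((t - ρ 0) * ((t - ρ 1) * (t - ρ 2)))) /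
      ((4 - t) * (3 - t) ^ 5) := by
    funext t
    rw [hF]
    simp only
    rw [hρ t, Fin.prod_univ_three, mul_assoc]
  -- the logarithmic derivative of F
  set G : ℂ → ℂ := fun s => 5 * (3 - s)⁻¹ + (4 - s)⁻¹ - ∑ i, (ρ i - s)⁻¹ with hGdef
  -- deriv L agrees with G near 0
  have hLG : deriv L =ᶠ[nhds (0:ℂ)] G := by
    obtain ⟨ε, hε, hball⟩ := Metric.eventually_nhds_iff_ball.mp
      (hFL.and hLa.eventually_analyticAt)
    have hmem : Metric.ball (0:ℂ) (min ε 1) ∈ nhds (0:ℂ) :=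
      Metric.ball_mem_nhds _ (lt_min hε one_pos)
    apply Filter.eventually_of_mem hmem
    intro t ht
    have ht1 : t ∈ Metric.ball (0:ℂ) 1 :=
      Metric.ball_subset_ball (min_le_right ε 1) ht
    have htε : t ∈ Metric.ball (0:ℂ) ε :=
      Metric.ball_subset_ball (min_le_left ε 1) ht
    obtain ⟨h3, h4, hr⟩ := key t ht1
    -- derivative of F at t
    have hnum : HasDerivAt (fun s : ℂ => 6 * (-((s - ρ 0) * ((s - ρ 1) * (s - ρ 2)))))
        (6 * (-(1 * ((t - ρ 1) * (t - ρ 2)) +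
          (t - ρ 0) * (1 * (t - ρ 2) + (t - ρ 1) * 1)))) t := by
      have h0 : HasDerivAt (fun s : ℂ => s - ρ 0) 1 t := (hasDerivAt_id t).sub_const _
      have h1 : HasDerivAt (fun s : ℂ => s - ρ 1) 1 t := (hasDerivAt_id t).sub_const _
      have h2 : HasDerivAt (fun s : ℂ => s - ρ 2) 1 t := (hasDerivAt_id t).sub_const _
      exact ((h0.mul (h1.mul h2)).neg).const_mul 6
    have hden : HasDerivAt (fun s : ℂ => (4 - s) * (3 - s) ^ 5)
        ((-1) * (3 - t) ^ 5 + (4 - t) * ((5 : ℕ) * (3 - t) ^ (5 - 1) * (-1))) t := by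
      have h4' : HasDerivAt (fun s : ℂ => 4 - s) (-1) t := (hasDerivAt_id t).const_sub 4
      have h3' : HasDerivAt (fun s : ℂ => 3 - s) (-1) t := (hasDerivAt_id t).const_sub 3
      exact h4'.mul (h3'.pow 5)
    have hdenne : (4 - t) * (3 - t) ^ 5 ≠ 0 := mul_ne_zero h4 (pow_ne_zero _ h3)
    have hFd : HasDerivAt F
        ((6 * (-(1 * ((t - ρ 1) * (t - ρ 2)) +
            (t - ρ 0) * (1 * (t - ρ 2) + (t - ρ 1) * 1))) * ((4 - t) * (3 - t) ^ 5) -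
          6 * (-((t - ρ 0) * ((t - ρ 1) * (t - ρ 2)))) *
            ((-1) * (3 - t) ^ 5 + (4 - t) * ((5 : ℕ) * (3 - t) ^ (5 - 1) * (-1)))) /
          ((4 - t) * (3 - t) ^ 5) ^ 2) t := by
      rw [hF2]
      exact hnum.div hden hdenne
    -- derivative of exp ∘ L at t
    have hLd : DifferentiableAt ℂ L t := (hball t htε).2.differentiableAt
    have hexpL : HasDerivAt (fun s => Complex.exp (L s)) (Complex.exp (L t) * deriv L t) t :=
      (hLd.hasDerivAt).cexp
    have heF : (fun s => Complex.exp (L s)) =ᶠ[nhds t] F :=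
      Filter.eventually_of_mem (Metric.isOpen_ball.mem_nhds htε) (fun s hs => (hball s hs).1)
    have hdeq : Complex.exp (L t) * deriv L t =
        (6 * (-(1 * ((t - ρ 1) * (t - ρ 2)) +
            (t - ρ 0) * (1 * (t - ρ 2) + (t - ρ 1) * 1))) * ((4 - t) * (3 - t) ^ 5) -
          6 * (-((t - ρ 0) * ((t - ρ 1) * (t - ρ 2)))) *
            ((-1) * (3 - t) ^ 5 + (4 - t) * ((5 : ℕ) * (3 - t) ^ (5 - 1) * (-1)))) /
          ((4 - t) * (3 - t) ^ 5) ^ 2 := by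
      rw [← hexpL.deriv, heF.deriv_eq, hFd.deriv]
    have hFt : Complex.exp (L t) = F t := (hball t htε).1
    have hkey : (6 * (-(1 * ((t - ρ 1) * (t - ρ 2)) +
            (t - ρ 0) * (1 * (t - ρ 2) + (t - ρ 1) * 1))) * ((4 - t) * (3 - t) ^ 5) -
          6 * (-((t - ρ 0) * ((t - ρ 1) * (t - ρ 2)))) *
            ((-1) * (3 - t) ^ 5 + (4 - t) * ((5 : ℕ) * (3 - t) ^ (5 - 1) * (-1)))) /
          ((4 - t) * (3 - t) ^ 5) ^ 2 = G t * Complex.exp (L t) := by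
      rw [hFt, hF2, hGdef]
      simp only [Fin.sum_univ_three]
      have hr0 := hr 0; have hr1 := hr 1; have hr2 := hr 2
      have hr0' : ρ 0 - t ≠ 0 := fun h => hr0 (by rw [← neg_sub] at h; simpa using neg_eq_zero.mp h)
      have hr1' : ρ 1 - t ≠ 0 := fun h => hr1 (by rw [← neg_sub] at h; simpa using neg_eq_zero.mp h)
      have hr2' : ρ 2 - t ≠ 0 := fun h => hr2 (by rw [← neg_sub] at h; simpa using neg_eq_zero.mp h)
      have hD : (4 - t) * (3 - t) ^ 5 ≠ 0 := mul_ne_zero h4 (pow_ne_zero _ h3)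
      have hD2 : ((4 - t) * (3 - t) ^ 5) ^ 2 ≠ 0 := pow_ne_zero _ hD
      rw [← mul_div_assoc, div_eq_div_iff hD2 hD]
      push_cast
      field_simp
      ring
    have := hdeq.trans hkey
    exact mul_left_cancel₀ (Complex.exp_ne_zero (L t)) (by rw [this]; ring)
  -- Part 2 : the cumulant formula
  have hpart2 : ∀ p : ℕ, 1 ≤ p → κ p = (Nat.factorial (p - 1) : ℂ) *
      (5 / 3 ^ p + 1 / 4 ^ p - ∑ i, (ρ i) ^ (-(p : ℤ))) := by
    intro p hp
    obtain ⟨q, rfl⟩ : ∃ q, p = q + 1 := ⟨p - 1, (Nat.succ_pred_eq_of_pos hp).symm⟩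
    rw [hκ, iteratedDeriv_succ', hLG.iteratedDeriv_eq q]
    have h0 : (0:ℂ) ∈ Metric.ball (0:ℂ) 1 := by simp
    rw [aux_G_iter ρ habs q 0 h0]
    simp only [Nat.add_sub_cancel, sub_zero, zpow_neg, zpow_natCast, Fin.sum_univ_three]
    ring
  refine ⟨habs, hpart2, ?_⟩
  -- Part 3 : asymptotics
  have heq' : ∀ᶠ p : ℕ in atTop,
      κ p / (5 * (Nat.factorial (p - 1) : ℂ) / 3 ^ p) =
      1 + (1/5) * ((3:ℂ)/4) ^ p - (1/5) * ∑ i, ((3:ℂ) / ρ i) ^ p := by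
    filter_upwards [eventually_ge_atTop 1] with p hp
    rw [hpart2 p hp]
    have f1 : ((p - 1).factorial : ℂ) ≠ 0 := Nat.cast_ne_zero.mpr (Nat.factorial_ne_zero _)
    have hρne : ∀ i, ρ i ≠ 0 := by
      intro i h
      have := habs i
      rw [h] at this
      simp at this
      linarith
    have h3p : (3:ℂ) ^ p ≠ 0 := pow_ne_zero _ (by norm_num)
    have h4p : (4:ℂ) ^ p ≠ 0 := pow_ne_zero _ (by norm_num)
    have hρp : ∀ i, (ρ i) ^ p ≠ 0 := fun i => pow_ne_zero _ (hρne i)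
    simp only [Fin.sum_univ_three, zpow_neg, zpow_natCast, div_pow]
    exact aux_ratio _ _ _ _ _ _ f1 h3p
  have t1 : Tendsto (fun p : ℕ => ((3:ℂ)/4) ^ p) atTop (nhds 0) := by
    apply tendsto_pow_atTop_nhds_zero_of_norm_lt_one
    rw [norm_div]
    simp
    norm_num
  have t2 : ∀ i : Fin 3, Tendsto (fun p : ℕ => ((3:ℂ) / ρ i) ^ p) atTop (nhds 0) := by
    intro i
    apply tendsto_pow_atTop_nhds_zero_of_norm_lt_one
    rw [norm_div]
    have h3 : ‖(3:ℂ)‖ = 3 := by simp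
    have := habs i
    have habs' : ‖ρ i‖ = ‖ρ i‖ := rfl
    rw [h3, habs', div_lt_one (by linarith)]
    linarith
  have tmain : Tendsto (fun p : ℕ =>
      1 + (1/5 : ℂ) * ((3:ℂ)/4) ^ p - (1/5) * ∑ i : Fin 3, ((3:ℂ) / ρ i) ^ p)
      atTop (nhds (1 + (1/5 : ℂ) * 0 - (1/5) * ∑ i : Fin 3, (0:ℂ))) := by
    exact (tendsto_const_nhds.add (t1.const_mul _)).sub
      ((tendsto_finset_sum _ (fun i _ => t2 i)).const_mul _)
  have heqE : (fun p : ℕ => κ p / (5 * (Nat.factorial (p - 1) : ℂ) / 3 ^ p)) =ᶠ[atTop]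
      (fun p : ℕ => 1 + (1/5 : ℂ) * ((3:ℂ)/4) ^ p - (1/5) * ∑ i : Fin 3, ((3:ℂ) / ρ i) ^ p) := heq'
  exact Tendsto.congr' heqE.symm (by simpa using tmain)
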